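/- If there exist orthomorphisms f, g of F_q (q > 3) at Hamming distance exactly 3, then there exists an orthomorphism of F_q whose reduced polynomial has degree exactly q - 3. -/
import Mathlib


def IsOrthomorphism {K : Type*} [Field K] (θ : K → K) : Prop :=
  Function.Bijective θ ∧ Function.Bijective fun x => θ x - x

lemma exists_rep {F : Type*} [Field F] [Fintype F] (hq : 0 < Fintype.card F) (θ : F → F) :
    ∃ p : Polynomial F, p.natDegree < Fintype.card F ∧ ∀ x, p.eval x = θ x := by
  classical
  refine ⟨Lagrange.interpolate Finset.univ id θ, ?_, ?_⟩
  · have hd := Lagrange.degree_interpolate_lt (v := id) (s := Finset.univ) θ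
      (Function.injective_id.injOn)
    rcases eq_or_ne (Lagrange.interpolate Finset.univ id θ) 0 with h0 | h0
    · simpa [h0] using hq
    · rw [← Polynomial.natDegree_lt_iff_degree_lt h0] at hd
      simpa using hd
  · intro x
    simpa using Lagrange.eval_interpolate_at_node θ (Function.injective_id.injOn)
      (Finset.mem_univ x)

/-- If there are orthomorphisms of `F_q` (q > 3) at Hamming distance exactly 3,
then some orthomorphism of `F_q` has reduced polynomial of degree exactly `q - 3`.
The Niederreiter–Robinson–Wan degree bound is assumed as a hypothesis. -/
theorem exists_orth_deg_q_sub_three {F : Type*} [Field F] [Fintype F]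
    (hq : 3 < Fintype.card F)
    (hbound : ∀ p : Polynomial F, p.natDegree < Fintype.card F →
      Function.Bijective (fun x => p.eval x) →
      Function.Bijective (fun x => p.eval x - x) →
      p.natDegree ≤ Fintype.card F - 3)
    (f g : F → F) (hf : IsOrthomorphism f) (hg : IsOrthomorphism g)
    (hH : {a : F | f a ≠ g a}.ncard = 3) :
    ∃ θ : F → F, IsOrthomorphism θ ∧ ∃ p : Polynomial F,
      p.natDegree < Fintype.card F ∧ (∀ x : F, p.eval x = θ x) ∧
      p.natDegree = Fintype.card F - 3 := by
  classical
  obtain ⟨pf, hpf, hpfe⟩ := exists_rep (by omega) f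
  obtain ⟨pg, hpg, hpge⟩ := exists_rep (by omega) g
  have hbf : pf.natDegree ≤ Fintype.card F - 3 := by
    apply hbound pf hpf
    · simpa [funext_iff.2 hpfe] using hf.1
    · have : (fun x => pf.eval x - x) = fun x => f x - x := by
        funext x; rw [hpfe]
      rw [this]; exact hf.2
  have hbg : pg.natDegree ≤ Fintype.card F - 3 := by
    apply hbound pg hpg
    · simpa [funext_iff.2 hpge] using hg.1
    · have : (fun x => pg.eval x - x) = fun x => g x - x := by
        funext x; rw [hpge]
      rw [this]; exact hg.2
  -- the difference set as a finset
  have hDeq : {a : F | f a ≠ g a} = ↑(Finset.univ.filter fun a => f a ≠ g a) := by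
    ext a; simp
  set D : Finset F := Finset.univ.filter fun a => f a ≠ g a with hD
  have hDcard : D.card = 3 := by
    rw [hDeq, Set.ncard_coe_finset] at hH; exact hH
  have hDc : Dᶜ.card = Fintype.card F - 3 := by
    rw [Finset.card_compl, hDcard]
  -- h := pf - pg is nonzero
  obtain ⟨a, ha⟩ : ∃ a, a ∈ D := Finset.card_pos.mp (by omega)
  have hane : f a ≠ g a := by simpa [hD] using ha
  have hne : pf - pg ≠ 0 := by
    intro h0
    apply hane
    have := congrArg (Polynomial.eval a) h0
    simp [Polynomial.eval_sub, hpfe, hpge] at this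
    linear_combination this
  -- every element of Dᶜ is a root of pf - pg
  have hsub : Dᶜ ⊆ (pf - pg).roots.toFinset := by
    intro x hx
    have hx' : f x = g x := by
      simp [hD] at hx; exact hx
    simp [Multiset.mem_toFinset, Polynomial.mem_roots hne, Polynomial.IsRoot,
      hpfe, hpge, hx']
  have hroots : Fintype.card F - 3 ≤ (pf - pg).natDegree := by
    calc Fintype.card F - 3 = Dᶜ.card := hDc.symm
      _ ≤ (pf - pg).roots.toFinset.card := Finset.card_le_card hsub
      _ ≤ Multiset.card (pf - pg).roots := Multiset.toFinset_card_le _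
      _ ≤ (pf - pg).natDegree := Polynomial.card_roots' _
  have hmax : Fintype.card F - 3 ≤ max pf.natDegree pg.natDegree :=
    le_trans hroots (Polynomial.natDegree_sub_le _ _)
  rcases le_max_iff.mp hmax with h | h
  · exact ⟨f, hf, pf, hpf, hpfe, le_antisymm hbf h⟩
  · exact ⟨g, hg, pg, hpg, hpge, le_antisymm hbg h⟩
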